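/- Let b, c ∈ ℝ³ with b ≠ 0, η(b,b) = 0, and η(b,c) = 0. Then there exists a unique real number β such that b × c = −β·b, and moreover η(c,c) = β². -/

import Mathlib

/-- The Minkowski bilinear form on `ℝ³`. -/
def eta (x y : Fin 3 → ℝ) : ℝ := -(x 0 * y 0) + x 1 * y 1 + x 2 * y 2

/-- The Lorentzian cross product on `ℝ³`, determined by `η(x × y, z) = det(x, y, z)`. -/
def lcross (x y : Fin 3 → ℝ) : Fin 3 → ℝ :=
  ![-(x 1 * y 2 - x 2 * y 1), x 2 * y 0 - x 0 * y 2, x 0 * y 1 - x 1 * y 0]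

/-- If `b ≠ 0` is null and `η(b, c) = 0`, then there is a unique real `β` with
`b × c = −β b`, and moreover `η(c, c) = β²`. -/
theorem exists_unique_beta_pointwise (b c : Fin 3 → ℝ) (hb : b ≠ 0)
    (hbnull : eta b b = 0) (hbc : eta b c = 0) :
    ∃! β : ℝ, lcross b c = (-β) • b ∧ eta c c = β ^ 2 := by
  unfold eta at hbnull hbc
  have hb0 : b 0 ≠ 0 := by
    intro h0
    apply hb
    have h1 : b 1 = 0 := by nlinarith [sq_nonneg (b 1), sq_nonneg (b 2)]
    have h2 : b 2 = 0 := by nlinarith [sq_nonneg (b 1), sq_nonneg (b 2)]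
    funext i
    fin_cases i <;> simp [h0, h1, h2]
  set β : ℝ := (b 1 * c 2 - b 2 * c 1) / b 0 with hβ
  have hβ0 : β * b 0 = b 1 * c 2 - b 2 * c 1 := by rw [hβ]; exact div_mul_cancel₀ _ hb0
  refine ⟨β, ⟨?_, ?_⟩, ?_⟩
  · funext i
    fin_cases i
    · show -(b 1 * c 2 - b 2 * c 1) = -β * b 0
      linarith
    · show b 2 * c 0 - b 0 * c 2 = -β * b 1
      have key : b 0 * (b 2 * c 0 - b 0 * c 2) = b 0 * (-β * b 1) := by
        linear_combination b 1 * hβ0 + c 2 * hbnull - b 2 * hbc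
      exact mul_left_cancel₀ hb0 key
    · show b 0 * c 1 - b 1 * c 0 = -β * b 2
      have key : b 0 * (b 0 * c 1 - b 1 * c 0) = b 0 * (-β * b 2) := by
        linear_combination b 2 * hβ0 - c 1 * hbnull + b 1 * hbc
      exact mul_left_cancel₀ hb0 key
  · unfold eta
    have key : b 0 * b 0 * (-(c 0 * c 0) + c 1 * c 1 + c 2 * c 2) = b 0 * b 0 * β ^ 2 := by
      linear_combination (b 0 * c 0 + b 1 * c 1 + b 2 * c 2) * hbc -
        (c 1 * c 1 + c 2 * c 2) * hbnull - (β * b 0 + b 1 * c 2 - b 2 * c 1) * hβ0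
    exact mul_left_cancel₀ (mul_ne_zero hb0 hb0) key
  · rintro β' ⟨heq, -⟩
    have h0 := congrFun heq 0
    simp only [lcross, Pi.smul_apply, smul_eq_mul, Matrix.cons_val_zero] at h0
    have : -β' * b 0 = -β * b 0 := by rw [← h0]; linarith
    have := mul_right_cancel₀ hb0 this
    linarith
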